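/- Let F : M → N be an immersion of a 2n-manifold into a Kähler manifold with no complex directions, and let Φ : TM → NM be the bundle morphism Φ(X) = (J dF(X))^⊥, the normal projection of J dF(X). Then Φ(X) = J dF(X) - dF(F*ω(X)), and Φ is an isomorphism of Riemannian vector bundles from (TM, ĝ) to the normal bundle (NM, g), where ĝ(X,Y) = g_M(X,Y) - g_M(F*ω(X), F*ω(Y)). -/

import Mathlib

open RealInnerProductSpace

/-- pointwise form on a tangent space: for an immersion `F` of a
`2n`-manifold into a Kähler manifold of complex dimension `2n` (so
`dim W = 2 · dim T`) with no complex directions (`J dF(x) ∉ dF(TM)` for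
`x ≠ 0`), the morphism `Φ(x) = (J dF x)^⊥` (normal projection) satisfies
`Φ(x) = J dF(x) - dF(F*ω x)` and is an isometric isomorphism from
`(T, ĝ)` onto the normal space `NM = (range dF)ᗮ`, where
`ĝ(x,y) = g(x,y) - g(F*ω x, F*ω y)`. -/
theorem stmt_6 {T W : Type*} [NormedAddCommGroup T] [InnerProductSpace ℝ T]
    [NormedAddCommGroup W] [InnerProductSpace ℝ W]
    [FiniteDimensional ℝ T] [FiniteDimensional ℝ W]
    (hdim : Module.finrank ℝ W = 2 * Module.finrank ℝ T)
    (dF : T →ₗ[ℝ] W) (hdF : ∀ x y : T, ⟪dF x, dF y⟫ = ⟪x, y⟫)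
    (Jn : W →ₗ[ℝ] W) (hJorth : ∀ u v : W, ⟪Jn u, Jn v⟫ = ⟪u, v⟫)
    (hJsq : ∀ u : W, Jn (Jn u) = -u)
    (A : T →ₗ[ℝ] T) (hA : ∀ x y : T, ⟪A x, y⟫ = ⟪Jn (dF x), dF y⟫)
    (hnc : ∀ x : T, x ≠ 0 → Jn (dF x) ∉ LinearMap.range dF) :
    ∀ NM : Submodule ℝ W, NM = (LinearMap.range dF)ᗮ →
    ∀ Φ : T → W, (∀ x, Φ x = (Submodule.orthogonalProjectionOnto NM (Jn (dF x)) : W)) →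
      (∀ x, Φ x = Jn (dF x) - dF (A x)) ∧
      Function.Injective Φ ∧
      (∀ x, Φ x ∈ NM) ∧
      (∀ u ∈ NM, ∃ x, Φ x = u) ∧
      (∀ x y : T, ⟪Φ x, Φ y⟫ = ⟪x, y⟫ - ⟪A x, A y⟫) := by

  intro NM hNM Phi hPhi
  have hdFinj : Function.Injective dF := by
    intro x y hxy
    have h : ⟪x - y, x - y⟫ = 0 := by
      have := hdF (x - y) (x - y)
      rw [← this, map_sub, hxy, sub_self, inner_zero_left]
    exact sub_eq_zero.mp (inner_self_eq_zero.mp h)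
  -- the formula
  have hmem : ∀ x : T, Jn (dF x) - dF (A x) ∈ NM := by
    intro x
    rw [hNM, Submodule.mem_orthogonal]
    rintro _ ⟨y, rfl⟩
    have h1 : ⟪dF y, Jn (dF x)⟫ = ⟪A x, y⟫ := by
      rw [real_inner_comm]; exact (hA x y).symm
    have h2 : ⟪dF y, dF (A x)⟫ = ⟪A x, y⟫ := by
      rw [hdF]; exact real_inner_comm _ _
    rw [inner_sub_right, h1, h2, sub_self]
  have hform : ∀ x : T, Phi x = Jn (dF x) - dF (A x) := by
    intro x
    rw [hPhi x]
    exact Submodule.eq_starProjection_of_mem_of_inner_eq_zero (hmem x) (by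
    intro w hw
    rw [hNM, Submodule.mem_orthogonal] at hw
    rw [sub_sub_cancel]
    exact hw _ ⟨A x, rfl⟩)
  -- injectivity of the linearized map
  have hker : ∀ x : T, Jn (dF x) - dF (A x) = 0 → x = 0 := by
    intro x hx
    by_contra hx0
    exact hnc x hx0 ⟨A x, by rw [← sub_eq_zero]; rw [sub_eq_zero] at hx ⊢; exact hx.symm⟩
  have hinj : Function.Injective Phi := by
    intro x y hxy
    rw [hform, hform] at hxy
    have : Jn (dF (x - y)) - dF (A (x - y)) = 0 := by
      simp only [map_sub]
      rw [sub_sub_sub_comm, hxy, sub_self]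
    exact sub_eq_zero.mp (hker _ this)
  -- inner product formula
  have hip : ∀ x y : T, ⟪Phi x, Phi y⟫ = ⟪x, y⟫ - ⟪A x, A y⟫ := by
    intro x y
    have e1 : ⟪Jn (dF x), Jn (dF y)⟫ = ⟪x, y⟫ := by rw [hJorth, hdF]
    have e2 : ⟪Jn (dF x), dF (A y)⟫ = ⟪A x, A y⟫ := (hA x (A y)).symm
    have e3 : ⟪dF (A x), Jn (dF y)⟫ = ⟪A x, A y⟫ := by
      rw [real_inner_comm]
      rw [← hA y (A x)]
      exact real_inner_comm _ _
    have e4 : ⟪dF (A x), dF (A y)⟫ = ⟪A x, A y⟫ := hdF _ _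
    rw [hform, hform, inner_sub_left, inner_sub_right, inner_sub_right, e1, e2, e3, e4]
    ring
  -- dimension count
  have hd1 : Module.finrank ℝ (LinearMap.range dF) = Module.finrank ℝ T :=
    LinearMap.finrank_range_of_inj hdFinj
  have hd2 : Module.finrank ℝ NM = Module.finrank ℝ T := by
    have := Submodule.finrank_add_finrank_orthogonal (K := LinearMap.range dF)
    rw [hd1, hdim] at this
    rw [hNM]
    omega
  -- linearized map into NM
  let L : T →ₗ[ℝ] W := Jn ∘ₗ dF - dF ∘ₗ A
  have hL : ∀ x, L x = Jn (dF x) - dF (A x) := fun x => rfl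
  let Lc : T →ₗ[ℝ] NM := L.codRestrict NM (fun x => hmem x)
  have hLcinj : Function.Injective Lc := by
    intro x y hxy
    have : L x = L y := congrArg Subtype.val hxy
    rw [hL, hL] at this
    have h0 : Jn (dF (x - y)) - dF (A (x - y)) = 0 := by
      simp only [map_sub]
      rw [sub_sub_sub_comm, this, sub_self]
    exact sub_eq_zero.mp (hker _ h0)
  have hsurj : ∀ u ∈ NM, ∃ x, Phi x = u := by
    intro u hu
    have hrange : LinearMap.range Lc = ⊤ := by
      apply Submodule.eq_top_of_finrank_eq
      rw [LinearMap.finrank_range_of_inj hLcinj, hd2]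
    obtain ⟨x, hx⟩ := LinearMap.range_eq_top.mp hrange ⟨u, hu⟩
    exact ⟨x, by rw [hform]; exact congrArg Subtype.val hx⟩
  exact ⟨hform, hinj, fun x => by rw [hform]; exact hmem x, hsurj, hip⟩
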